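/- Characterization of the unknown-value output for the multiplication-based integral: ∫^{⊗_D}_{DPR,μ} f = * if and only if μ({i : f_i >_ℓ *}) ≤_ℓ *, μ({i : f_i ≥_ℓ *}) ≥_ℓ *, and f_i >_ℓ 0 for at least one i ∈ C. -/

import Mathlib

/-- A linearly ordered (bounded, integral-scale) residuated lattice:
`⊥` plays the role of `0` and `⊤` the role of `1`. -/
class LinResLat (L : Type*) extends LinearOrder L, BoundedOrder L where
  mul : L → L → L
  imp : L → L → L
  mul_comm : ∀ a b : L, mul a b = mul b a
  mul_assoc : ∀ a b c : L, mul (mul a b) c = mul a (mul b c)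
  mul_one : ∀ a : L, mul a ⊤ = a
  adjoint : ∀ a b c : L, mul a b ≤ c ↔ a ≤ imp b c
  bot_lt_top : (⊥ : L) < ⊤

/-- The Dragonfly carrier `L* = L ∪ {*}`. -/
inductive Dstar (L : Type*) where
  | of : L → Dstar L
  | star : Dstar L

namespace Dstar

variable {L : Type*} [LinResLat L]

/-- Dragonfly multiplication `⊗_D`. -/
def dmul : Dstar L → Dstar L → Dstar L
  | of a, of b => of (LinResLat.mul a b)
  | of a, star => if a = ⊥ then of ⊥ else star
  | star, of b => if b = ⊥ then of ⊥ else star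
  | star, star => star

/-- Dragonfly meet `∧_D`. -/
def dmeet : Dstar L → Dstar L → Dstar L
  | of a, of b => of (a ⊓ b)
  | of a, star => if a = ⊥ then of ⊥ else star
  | star, of b => if b = ⊥ then of ⊥ else star
  | star, star => star

/-- Dragonfly join `∨_D`. -/
def djoin : Dstar L → Dstar L → Dstar L
  | of a, of b => of (a ⊔ b)
  | of a, star => if a = ⊥ then star else of a
  | star, of b => if b = ⊥ then star else of b
  | star, star => star

/-- Dragonfly residuum `→_D`. -/
def dimp : Dstar L → Dstar L → Dstar L
  | of a, of b => of (LinResLat.imp a b)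
  | of a, star => if a = ⊥ then of ⊤ else star
  | star, of b => if b = ⊥ then star else of b
  | star, star => of ⊤

/-- Embedding of `L*` into `Lex (L × Bool)` realizing the linear order `≤_ℓ`
which extends the order of `L` with `0 <_ℓ * <_ℓ α` for all `α ∈ L \ {0}`. -/
def emb : Dstar L → Lex (L × Bool)
  | of a => toLex (a, false)
  | star => toLex ((⊥ : L), true)

theorem emb_injective : Function.Injective (emb (L := L)) := by
  intro x y h
  cases x <;> cases y <;>
    simp only [emb, toLex_inj, Prod.mk.injEq] at h <;> simp_all

/-- The linear order `≤_ℓ` on the Dragonfly algebra. -/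
instance : LinearOrder (Dstar L) := LinearOrder.lift' emb emb_injective

theorem le_def (x y : Dstar L) : x ≤ y ↔ emb x ≤ emb y := Iff.rfl

instance : OrderBot (Dstar L) where
  bot := of ⊥
  bot_le x := by
    cases x with
    | of a => rw [le_def]; simp only [emb, Prod.Lex.le_iff]; exact bot_le.lt_or_eq.imp id (by simp_all)
    | star => rw [le_def]; simp [emb, Prod.Lex.le_iff]
instance : OrderTop (Dstar L) where
  top := of ⊤
  le_top x := by
    cases x with
    | of a => rw [le_def]; simp only [emb, Prod.Lex.le_iff]; exact le_top.lt_or_eq.imp id (by simp_all)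
    | star => rw [le_def]; simp only [emb, Prod.Lex.le_iff]; exact Or.inl LinResLat.bot_lt_top

theorem bot_eq : (⊥ : Dstar L) = of ⊥ := rfl
theorem top_eq : (⊤ : Dstar L) = of ⊤ := rfl

variable {ι : Type*} [Fintype ι] [DecidableEq ι]

/-- The multiplication-based qualitative (DPR) integral on the Dragonfly algebra:
`∫^{⊗_D}_{DPR,μ} f = ⋁_{A ⊆ C} (μ(A) ⊗_D ⋀_{i ∈ A} f_i)`. -/
def integMul (μ : Finset ι → Dstar L) (f : ι → Dstar L) : Dstar L :=
  Finset.univ.powerset.sup fun A => dmul (μ A) (A.inf f)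

/-- The conjugate capacity `μ^c(A) = μ(C \ A) →_D 0`. -/
def conj (μ : Finset ι → Dstar L) (A : Finset ι) : Dstar L :=
  dimp (μ Aᶜ) (of ⊥)

/-- The residuum-based qualitative (DPR) integral on the Dragonfly algebra:
`∫^{→_D}_{DPR,μ} f = ⋀_{A ⊆ C} (μ^c(A) →_D ⋁_{i ∈ A} f_i)`. -/
def integImp (μ : Finset ι → Dstar L) (f : ι → Dstar L) : Dstar L :=
  Finset.univ.powerset.inf fun A => dimp (conj μ A) (A.sup f)

end Dstar


section AuxLemmas

namespace Dstar

variable {L : Type*} [LinResLat L]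

lemma of_le_of_iff {a b : L} : (of a : Dstar L) ≤ of b ↔ a ≤ b := by
  rw [le_def]; simp only [emb, Prod.Lex.le_iff]
  constructor
  · rintro (h | ⟨h, -⟩); exacts [h.le, h.le]
  · intro h
    rcases h.lt_or_eq with h | h
    · exact Or.inl h
    · exact Or.inr ⟨h, le_rfl⟩

lemma of_le_star_iff {a : L} : (of a : Dstar L) ≤ star ↔ a = ⊥ := by
  rw [le_def]; simp only [emb, Prod.Lex.le_iff]
  constructor
  · rintro (h | ⟨h, -⟩)
    · exact (not_lt_bot h).elim
    · exact h
  · intro h; exact Or.inr ⟨h, by change false ≤ true; decide⟩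

lemma star_le_of_iff {b : L} : (star : Dstar L) ≤ of b ↔ ⊥ < b := by
  rw [le_def]; simp only [emb, Prod.Lex.le_iff]
  constructor
  · rintro (h | ⟨-, h⟩)
    · exact h
    · exact absurd h (by change ¬ (true ≤ false); decide)
  · exact Or.inl

lemma bot_le_star : (of ⊥ : Dstar L) ≤ star := of_le_star_iff.mpr rfl

lemma star_lt_of_iff {b : L} : (star : Dstar L) < of b ↔ ⊥ < b := by
  rw [lt_iff_le_not_ge, star_le_of_iff, of_le_star_iff]
  constructor
  · rintro ⟨h, -⟩; exact h
  · intro h; exact ⟨h, h.ne'⟩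

lemma star_lt_iff {x : Dstar L} : star < x ↔ ∃ b : L, ⊥ < b ∧ x = of b := by
  cases x with
  | of b =>
    rw [star_lt_of_iff]
    constructor
    · intro h; exact ⟨b, h, rfl⟩
    · rintro ⟨c, hc, hce⟩
      obtain rfl : b = c := by injection hce
      exact hc
  | star =>
    simp only [lt_irrefl, false_iff]
    rintro ⟨c, -, h⟩
    cases h

lemma lmul_mono_right {a b c : L} (h : b ≤ c) :
    LinResLat.mul a b ≤ LinResLat.mul a c := by
  rw [LinResLat.mul_comm a b, LinResLat.mul_comm a c]
  have h1 : LinResLat.mul c a ≤ LinResLat.mul c a := le_rfl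
  rw [LinResLat.adjoint] at h1
  exact (LinResLat.adjoint b a _).mpr (h.trans h1)

lemma lmul_bot (a : L) : LinResLat.mul a ⊥ = ⊥ := by
  have h2 : LinResLat.mul a ⊥ ≤ LinResLat.mul a ⊤ := lmul_mono_right bot_le
  rw [LinResLat.mul_one] at h2
  have h3 : LinResLat.mul a ⊥ = LinResLat.mul ⊥ a := LinResLat.mul_comm a ⊥
  have h4 : LinResLat.mul ⊥ a ≤ LinResLat.mul ⊥ ⊤ := lmul_mono_right le_top
  rw [LinResLat.mul_one] at h4
  exact le_antisymm (h3 ▸ h4) bot_le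

lemma bot_lmul (a : L) : LinResLat.mul ⊥ a = ⊥ := by
  rw [LinResLat.mul_comm]; exact lmul_bot a

lemma dmul_le_star {x y : Dstar L} (h : x ≤ star ∨ y ≤ star) :
    dmul x y ≤ star := by
  cases x with
  | star =>
    cases y with
    | star => exact le_rfl
    | of b =>
      show (if b = ⊥ then of ⊥ else star) ≤ star
      split
      · exact bot_le_star
      · exact le_rfl
  | of a =>
    cases y with
    | star =>
      show (if a = ⊥ then of ⊥ else star) ≤ star
      split
      · exact bot_le_star
      · exact le_rfl
    | of b =>
      show of (LinResLat.mul a b) ≤ star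
      rcases h with h | h <;> rw [of_le_star_iff] at h <;> subst h
      · rw [bot_lmul]; exact bot_le_star
      · rw [lmul_bot]; exact bot_le_star

lemma star_lt_dmul (hnzd : ∀ a b : L, LinResLat.mul a b = ⊥ → a = ⊥ ∨ b = ⊥)
    {a b : L} (ha : ⊥ < a) (hb : ⊥ < b) :
    (star : Dstar L) < dmul (of a) (of b) := by
  show (star : Dstar L) < of (LinResLat.mul a b)
  rw [star_lt_of_iff]
  refine bot_lt_iff_ne_bot.mpr fun hq => ?_
  rcases hnzd a b hq with h | h
  · exact ha.ne' h
  · exact hb.ne' h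

lemma dmul_eq_star_of {x y : Dstar L} (hx : star ≤ x) (hy : star ≤ y)
    (h : x = star ∨ y = star) : dmul x y = star := by
  rcases h with rfl | rfl
  · cases y with
    | star => rfl
    | of b =>
      show (if b = ⊥ then of ⊥ else star) = star
      rw [star_le_of_iff] at hy
      rw [if_neg hy.ne']
  · cases x with
    | star => rfl
    | of a =>
      show (if a = ⊥ then of ⊥ else star) = star
      rw [star_le_of_iff] at hx
      rw [if_neg hx.ne']

lemma star_le_of_dmul_eq_star {x y : Dstar L} (h : dmul x y = star) :
    star ≤ x ∧ star ≤ y := by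
  cases x with
  | of a =>
    cases y with
    | of b => exact absurd h (by intro h'; cases h')
    | star =>
      have h' : (if a = ⊥ then of ⊥ else star : Dstar L) = star := h
      by_cases ha : a = ⊥
      · rw [if_pos ha] at h'; exact absurd h' (by intro h''; cases h'')
      · exact ⟨star_le_of_iff.mpr (bot_lt_iff_ne_bot.mpr ha), le_rfl⟩
  | star =>
    cases y with
    | of b =>
      have h' : (if b = ⊥ then of ⊥ else star : Dstar L) = star := h
      by_cases hb : b = ⊥
      · rw [if_pos hb] at h'; exact absurd h' (by intro h''; cases h'')
      · exact ⟨le_rfl, star_le_of_iff.mpr (bot_lt_iff_ne_bot.mpr hb)⟩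
    | star => exact ⟨le_rfl, le_rfl⟩

end Dstar

end AuxLemmas

open Dstar in
/-- `∫^{⊗_D}_{DPR,μ} f = *` if and only if `μ({i : f_i >_ℓ *}) ≤_ℓ *`,
`μ({i : f_i ≥_ℓ *}) ≥_ℓ *`, and `f_i >_ℓ 0` for at least one `i`. -/
theorem integMul_eq_star_iff {L ι : Type*} [LinResLat L]
    [Fintype ι] [DecidableEq ι] [Nonempty ι]
    (hnzd : ∀ a b : L, LinResLat.mul a b = ⊥ → a = ⊥ ∨ b = ⊥)
    (μ : Finset ι → Dstar L)
    (hμ0 : μ ∅ = Dstar.of ⊥) (hμ1 : μ Finset.univ = Dstar.of ⊤)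
    (hmono : ∀ A B : Finset ι, A ⊆ B → μ A ≤ μ B)
    (f : ι → Dstar L) :
    integMul μ f = Dstar.star ↔
      (μ (Finset.univ.filter fun i => Dstar.star < f i) ≤ Dstar.star ∧
       Dstar.star ≤ μ (Finset.univ.filter fun i => Dstar.star ≤ f i) ∧
       ∃ i : ι, Dstar.of ⊥ < f i) := by
  classical
  set Fgt := Finset.univ.filter fun i => Dstar.star < f i with hFgt
  set Fge := Finset.univ.filter fun i => Dstar.star ≤ f i with hFge
  have hstar_lt_top : (star : Dstar L) < ⊤ := by
    rw [top_eq, star_lt_of_iff]; exact LinResLat.bot_lt_top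
  have hmemP : ∀ A : Finset ι, A ∈ Finset.univ.powerset :=
    fun A => Finset.mem_powerset.mpr (Finset.subset_univ A)
  constructor
  · intro h
    have hle : ∀ A : Finset ι, dmul (μ A) (A.inf f) ≤ star := by
      intro A
      rw [← h]
      exact Finset.le_sup (f := fun A => dmul (μ A) (A.inf f)) (hmemP A)
    obtain ⟨A, -, hAeq⟩ := Finset.exists_mem_eq_sup (Finset.univ.powerset)
      ⟨∅, hmemP ∅⟩ (fun A => dmul (μ A) (A.inf f))
    rw [integMul] at h
    rw [h] at hAeq
    obtain ⟨hm, hg⟩ := star_le_of_dmul_eq_star hAeq.symm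
    have h2 : Dstar.star ≤ μ Fge := by
      refine le_trans hm (hmono A Fge ?_)
      intro i hi
      simp only [hFge, Finset.mem_filter, Finset.mem_univ, true_and]
      exact Finset.le_inf_iff.mp hg i hi
    refine ⟨?_, h2, ?_⟩
    · by_contra hcon
      rw [not_le] at hcon
      obtain ⟨b, hb, hbe⟩ := star_lt_iff.mp hcon
      have hinf : star < Fgt.inf f :=
        (Finset.lt_inf_iff hstar_lt_top).mpr
          (fun i hi => (Finset.mem_filter.mp hi).2)
      obtain ⟨c, hc, hce⟩ := star_lt_iff.mp hinf
      have hlt : star < dmul (μ Fgt) (Fgt.inf f) := by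
        rw [hbe, hce]; exact star_lt_dmul hnzd hb hc
      exact lt_irrefl _ (hlt.trans_le (hle Fgt))
    · by_contra hcon
      push_neg at hcon
      have hFge_empty : Fge = ∅ := by
        refine Finset.eq_empty_of_forall_notMem fun i hi => ?_
        have hfi : star ≤ f i := (Finset.mem_filter.mp hi).2
        have hfi' : f i ≤ Dstar.of ⊥ := hcon i
        have : (star : Dstar L) ≤ of ⊥ := hfi.trans hfi'
        rw [star_le_of_iff] at this
        exact lt_irrefl _ this
      rw [hFge_empty, hμ0, star_le_of_iff] at h2
      exact lt_irrefl _ h2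
  · rintro ⟨h1, h2, -, -⟩
    rw [integMul]
    apply le_antisymm
    · apply Finset.sup_le
      intro A _
      by_cases hA : Dstar.star < A.inf f
      · refine dmul_le_star (Or.inl ?_)
        refine le_trans (hmono A Fgt ?_) h1
        intro i hi
        simp only [hFgt, Finset.mem_filter, Finset.mem_univ, true_and]
        exact hA.trans_le (Finset.inf_le hi)
      · exact dmul_le_star (Or.inr (not_lt.mp hA))
    · have hinf_ge : Dstar.star ≤ Fge.inf f :=
        Finset.le_inf_iff.mpr fun i hi => (Finset.mem_filter.mp hi).2
      have key : dmul (μ Fge) (Fge.inf f) = Dstar.star := by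
        by_cases hall : ∀ i ∈ Fge, Dstar.star < f i
        · have hsub : Fge ⊆ Fgt := by
            intro i hi
            simp only [hFgt, Finset.mem_filter, Finset.mem_univ, true_and]
            exact hall i hi
          have hμe : μ Fge = Dstar.star := le_antisymm (le_trans (hmono _ _ hsub) h1) h2
          exact dmul_eq_star_of h2 hinf_ge (Or.inl hμe)
        · push_neg at hall
          obtain ⟨j, hj, hjle⟩ := hall
          have hinfeq : Fge.inf f = Dstar.star := by
            refine le_antisymm (le_trans (Finset.inf_le hj) hjle) hinf_ge
          exact dmul_eq_star_of h2 hinf_ge (Or.inr hinfeq)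
      calc (star : Dstar L) = dmul (μ Fge) (Fge.inf f) := key.symm
        _ ≤ _ := Finset.le_sup (f := fun A => dmul (μ A) (A.inf f)) (hmemP Fge)
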